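/- Let κ > 0, c ≥ 0, c′ ≥ 0 and M ≥ 0. Let m : [0, ∞) → [0, ∞) be continuous with ∫₀^t m(s) ds ≤ M for every t ≥ 0, and let y : [0, ∞) → ℝ be differentiable with y(t) ≥ 1 for all t ≥ 0 and satisfying the differential inequality y′(t) + κ ≤ c·m(t)·y(t) + c′·y(t)^{−1/2} for all t ≥ 0. Then y(t) ≤ max(y(0), 4c′²/κ²)·exp(c·M) for all t ≥ 0. -/

import Mathlib

open Set intervalIntegral

/-- Gronwall-type comparison argument from the proof of Lemma 5.2 of the paper:
if `y ≥ 1` satisfies `y' + κ ≤ c m(t) y + c' y^{-1/2}` with `m ≥ 0` continuous and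
`∫₀^t m ≤ M` for all `t ≥ 0`, then `y(t) ≤ max(y(0), 4c'²/κ²)·exp(cM)` for all `t ≥ 0`. -/
theorem stmt2 (κ c c' M : ℝ) (hκ : 0 < κ) (hc : 0 ≤ c) (hc' : 0 ≤ c') (hM : 0 ≤ M)
    (m : ℝ → ℝ) (hmc : ContinuousOn m (Ici (0 : ℝ)))
    (hmnn : ∀ t ∈ Ici (0 : ℝ), 0 ≤ m t)
    (hmint : ∀ t ∈ Ici (0 : ℝ), ∫ s in (0 : ℝ)..t, m s ≤ M)
    (y : ℝ → ℝ) (hyd : ∀ t ∈ Ici (0 : ℝ), DifferentiableAt ℝ y t)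
    (hy1 : ∀ t ∈ Ici (0 : ℝ), 1 ≤ y t)
    (hineq : ∀ t ∈ Ici (0 : ℝ),
      deriv y t + κ ≤ c * m t * y t + c' * (y t) ^ (-(1 : ℝ) / 2)) :
    ∀ t ∈ Ici (0 : ℝ), y t ≤ max (y 0) (4 * c' ^ 2 / κ ^ 2) * Real.exp (c * M) := by
  intro t₀ ht₀
  set B : ℝ := 4 * c' ^ 2 / κ ^ 2 with hB
  set K : ℝ := max (y 0) B with hK
  -- extend m continuously to all of ℝ
  set n : ℝ → ℝ := fun t => m (max t 0) with hn
  have hncont : Continuous n := by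
    have hmax : Continuous fun t : ℝ => max t 0 := continuous_id.max continuous_const
    exact hmc.comp_continuous hmax fun x => mem_Ici.2 (le_max_right _ _)
  have hnnn : ∀ t, 0 ≤ n t := fun t => hmnn _ (mem_Ici.2 (le_max_right _ _))
  have hneq : ∀ t, 0 ≤ t → n t = m t := by
    intro t ht; simp only [hn, max_eq_left ht]
  -- Φ and its properties
  set Φ : ℝ → ℝ := fun t => c * ∫ s in (0:ℝ)..t, n s with hΦ
  have hΦd : ∀ t, HasDerivAt Φ (c * n t) t := by
    intro t
    exact (intervalIntegral.integral_hasDerivAt_right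
      (hncont.intervalIntegrable 0 t)
      (hncont.stronglyMeasurableAtFilter _ _) hncont.continuousAt).const_mul c
  have hΦint : ∀ t, 0 ≤ t → (∫ s in (0:ℝ)..t, n s) = ∫ s in (0:ℝ)..t, m s := by
    intro t ht
    apply intervalIntegral.integral_congr
    intro s hs
    rw [uIcc_of_le ht] at hs
    exact hneq s hs.1
  have hΦ0 : Φ 0 = 0 := by simp [hΦ]
  have hΦnn : ∀ t, 0 ≤ t → 0 ≤ Φ t := by
    intro t ht
    exact mul_nonneg hc (intervalIntegral.integral_nonneg ht fun s _ => hnnn s)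
  have hΦM : ∀ t, 0 ≤ t → Φ t ≤ c * M := by
    intro t ht
    rw [hΦ]; dsimp only
    rw [hΦint t ht]
    exact mul_le_mul_of_nonneg_left (hmint t ht) hc
  -- the auxiliary function g
  set g : ℝ → ℝ := fun t => y t * Real.exp (-Φ t) with hg
  have hgd : ∀ t, 0 ≤ t → HasDerivAt g
      (deriv y t * Real.exp (-Φ t) + y t * (Real.exp (-Φ t) * (-(c * n t)))) t := by
    intro t ht
    exact ((hyd t ht).hasDerivAt).mul ((hΦd t).neg.exp)
  have hgcont : ContinuousOn g (Ici (0:ℝ)) := by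
    intro t ht
    exact ((hgd t ht).differentiableAt.continuousAt).continuousWithinAt
  have hypos : ∀ t, 0 ≤ t → 0 < y t := fun t ht => lt_of_lt_of_le one_pos (hy1 t ht)
  -- key derivative estimate where y > B
  have hderiv : ∀ t, 0 ≤ t → B < y t → deriv g t ≤ 0 := by
    intro t ht hyt
    have hd := hgd t ht
    rw [hd.deriv]
    have hy' : deriv y t ≤ c * m t * y t := by
      have h1 := hineq t ht
      have ha : (0:ℝ) < y t := hypos t ht
      have hkey : c' * (y t) ^ (-(1:ℝ)/2) ≤ κ := by
        have hs : 0 < Real.sqrt (y t) := Real.sqrt_pos.2 ha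
        have hsq : Real.sqrt (y t) ^ 2 = y t := Real.sq_sqrt ha.le
        have hrw : (y t) ^ (-(1:ℝ)/2) = (Real.sqrt (y t))⁻¹ := by
          rw [neg_div, Real.rpow_neg ha.le, ← Real.sqrt_eq_rpow]
        rw [hrw]
        rw [mul_inv_le_iff₀ hs]
        have hBlt : 4 * c' ^ 2 < y t * κ ^ 2 := by
          have := (div_lt_iff₀ (by positivity : (0:ℝ) < κ ^ 2)).1 hyt
          linarith
        nlinarith [sq_nonneg (κ * Real.sqrt (y t) - 2 * c'), mul_pos hκ hs]
      linarith
    have hexp : 0 < Real.exp (-Φ t) := Real.exp_pos _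
    rw [hneq t ht]
    calc deriv y t * Real.exp (-Φ t) + y t * (Real.exp (-Φ t) * (-(c * m t)))
        = (deriv y t - c * m t * y t) * Real.exp (-Φ t) := by ring
      _ ≤ 0 := mul_nonpos_of_nonpos_of_nonneg (by linarith) hexp.le
  -- main contradiction argument
  by_contra hcon
  push_neg at hcon
  have hgt₀ : K < g t₀ := by
    have h1 : Real.exp (-(c * M)) ≤ Real.exp (-Φ t₀) :=
      Real.exp_le_exp.2 (neg_le_neg (hΦM t₀ ht₀))
    have h2 : K * Real.exp (c * M) * Real.exp (-(c * M)) < y t₀ * Real.exp (-Φ t₀) := by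
      apply lt_of_lt_of_le (mul_lt_mul_of_pos_right hcon (Real.exp_pos _))
      exact mul_le_mul_of_nonneg_left h1 (hypos t₀ ht₀).le
    rw [mul_assoc, ← Real.exp_add] at h2
    simpa using h2
  have hKy0 : y 0 ≤ K := le_max_left _ _
  have hBK : B ≤ K := le_max_right _ _
  set S : Set ℝ := Icc (0:ℝ) t₀ ∩ g ⁻¹' (Iic K) with hS
  have h0S : (0:ℝ) ∈ S := by
    constructor
    · exact ⟨le_refl _, ht₀⟩
    · simp only [mem_preimage, mem_Iic, hg, hΦ0]
      simpa using hKy0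
  have hSclosed : IsClosed S := by
    apply ContinuousOn.preimage_isClosed_of_isClosed
      (hgcont.mono (Icc_subset_Ici_self)) isClosed_Icc isClosed_Iic
  have hSne : S.Nonempty := ⟨0, h0S⟩
  have hSbdd : BddAbove S := ⟨t₀, fun x hx => hx.1.2⟩
  set s := sSup S with hs
  have hsS : s ∈ S := hSclosed.csSup_mem hSne hSbdd
  have hs0 : 0 ≤ s := hsS.1.1
  have hst₀ : s ≤ t₀ := hsS.1.2
  have hgs : g s ≤ K := hsS.2
  have hslt : s < t₀ := by
    rcases lt_or_eq_of_le hst₀ with h | h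
    · exact h
    · exact absurd (h ▸ hgs) (not_le.2 hgt₀)
  -- y > B on (s, t₀]
  have hyB : ∀ t ∈ Ioc s t₀, B < y t := by
    intro t htm
    have ht0 : 0 ≤ t := hs0.trans htm.1.le
    have hgK : K < g t := by
      by_contra hle
      push_neg at hle
      have : t ∈ S := ⟨⟨ht0, htm.2⟩, hle⟩
      exact absurd (le_csSup hSbdd this) (not_le.2 htm.1)
    have hexp1 : Real.exp (-Φ t) ≤ 1 := by
      rw [Real.exp_le_one_iff]
      linarith [hΦnn t ht0]
    have : g t ≤ y t := by
      calc g t = y t * Real.exp (-Φ t) := rfl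
        _ ≤ y t * 1 := mul_le_mul_of_nonneg_left hexp1 (hypos t ht0).le
        _ = y t := mul_one _
    linarith [lt_of_le_of_lt hBK hgK]
  have hanti : AntitoneOn g (Icc s t₀) := by
    apply antitoneOn_of_deriv_nonpos (convex_Icc s t₀)
    · exact hgcont.mono (fun x hx => hs0.trans hx.1)
    · intro x hx
      rw [interior_Icc] at hx
      exact ((hgd x (hs0.trans hx.1.le)).differentiableAt).differentiableWithinAt
    · intro x hx
      rw [interior_Icc] at hx
      exact hderiv x (hs0.trans hx.1.le) (hyB x ⟨hx.1, hx.2.le⟩)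
  have : g t₀ ≤ g s := hanti (left_mem_Icc.2 hst₀) (right_mem_Icc.2 hst₀) hst₀
  linarith
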